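/- Let Π be a finite root system in the dual of a finite-dimensional real inner product space 𝔞, with simple system Σ, positive system Π⁺, open fundamental Weyl chamber 𝔞⁺ = {H ∈ 𝔞 : α(H) > 0 for all α ∈ Σ}, and Weyl group W. For Θ ⊆ Σ let W_Θ ⊆ W be the subgroup generated by the reflections s_α with α ∈ Θ. Then for any w₁, w₂ ∈ W the open cones int(w₁ · W_Θ · cl(𝔞⁺)) and int(w₂ · W_Θ · cl(𝔞⁺)) are either equal or disjoint; moreover they are equal if and only if the cosets w₁W_Θ and w₂W_Θ coincide. -/

import Mathlib

open Filter Topology RealInnerProductSpace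

section

variable {𝔞 : Type*} [NormedAddCommGroup 𝔞] [InnerProductSpace ℝ 𝔞] [FiniteDimensional ℝ 𝔞]

/-- The vector `u ∈ 𝔞` representing the functional `α` via the inner product:
`α x = ⟪u, x⟫` for all `x`. -/
noncomputable def rieszVec (α : 𝔞 →ₗ[ℝ] ℝ) : 𝔞 :=
  (InnerProductSpace.toDual ℝ 𝔞).symm (LinearMap.toContinuousLinearMap α)

/-- The orthogonal reflection of `𝔞` in the hyperplane `ker α`:
`x ↦ x - (2 α x / α u) • u`, where `u` is the Riesz vector of `α`. -/
noncomputable def rootRefl (α : 𝔞 →ₗ[ℝ] ℝ) : Module.End ℝ 𝔞 :=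
  LinearMap.id - (2 / α (rieszVec α)) • (α.smulRight (rieszVec α))

/-- `RS` bundles the data of a finite (possibly non-reduced) root system
`rts ⊆ 𝔞* \ {0}`, stable under the (duals of the) root reflections, together
with a positive system `pos` coming from a simple system `sim`. -/
structure IsRootSystemWithBase (rts pos : Set (𝔞 →ₗ[ℝ] ℝ)) (sim : Finset (𝔞 →ₗ[ℝ] ℝ)) : Prop where
  finite : rts.Finite
  ne_zero : (0 : 𝔞 →ₗ[ℝ] ℝ) ∉ rts
  refl_mem : ∀ α ∈ rts, ∀ β ∈ rts, β ∘ₗ (rootRefl α : 𝔞 →ₗ[ℝ] 𝔞) ∈ rts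
  sim_subset : ↑sim ⊆ pos
  pos_subset : pos ⊆ rts
  union : rts = pos ∪ (fun β => -β) '' pos
  disjoint : Disjoint pos ((fun β => -β) '' pos)
  pos_comb : ∀ β ∈ pos, ∃ c : (𝔞 →ₗ[ℝ] ℝ) → ℝ,
    (∀ α ∈ sim, 0 ≤ c α) ∧ β = ∑ α ∈ sim, c α • α
  indep : LinearIndependent ℝ (fun α : sim => (α : 𝔞 →ₗ[ℝ] ℝ))

/-- The open fundamental Weyl chamber determined by the simple system `sim`. -/
def weylChamber (sim : Finset (𝔞 →ₗ[ℝ] ℝ)) : Set 𝔞 :=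
  {H : 𝔞 | ∀ α ∈ sim, 0 < α H}

/-- `⟨Θ⟩ = Π ∩ span ℝ Θ`, the roots lying in the span of `Θ`. -/
def rootsSpannedBy (rts : Set (𝔞 →ₗ[ℝ] ℝ)) (Θ : Finset (𝔞 →ₗ[ℝ] ℝ)) : Set (𝔞 →ₗ[ℝ] ℝ) :=
  rts ∩ (Submodule.span ℝ (↑Θ : Set (𝔞 →ₗ[ℝ] ℝ)) : Set (𝔞 →ₗ[ℝ] ℝ))

/-- The subgroup `W_Θ` of the Weyl group generated by the reflections `s_α`,
`α ∈ Θ` (as a submonoid of `End 𝔞`; since the reflections are involutions this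
has the same elements as the generated group). -/
noncomputable def weylSubmonoid (Θ : Set (𝔞 →ₗ[ℝ] ℝ)) : Submonoid (Module.End ℝ 𝔞) :=
  Submonoid.closure (rootRefl '' Θ)


lemma riesz_apply (α : 𝔞 →ₗ[ℝ] ℝ) (x : 𝔞) : ⟪rieszVec α, x⟫ = α x := by
  simpa [rieszVec] using
    (InnerProductSpace.toDual_symm_apply (𝕜 := ℝ) (E := 𝔞)
      (y := LinearMap.toContinuousLinearMap α) (x := x))

lemma riesz_self (α : 𝔞 →ₗ[ℝ] ℝ) : α (rieszVec α) = ⟪rieszVec α, rieszVec α⟫ :=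
  (riesz_apply α _).symm

lemma rieszVec_eq_zero (α : 𝔞 →ₗ[ℝ] ℝ) (h : rieszVec α = 0) : α = 0 := by
  ext x
  rw [← riesz_apply, h, inner_zero_left]; rfl

lemma rootRefl_apply (α : 𝔞 →ₗ[ℝ] ℝ) (x : 𝔞) :
    rootRefl α x = x - (2 / α (rieszVec α) * α x) • rieszVec α := by
  simp [rootRefl, LinearMap.smulRight_apply, smul_smul]

lemma riesz_self_pos (α : 𝔞 →ₗ[ℝ] ℝ) (h : α ≠ 0) : 0 < α (rieszVec α) := by
  rw [riesz_self]
  rcases (real_inner_self_nonneg (x := rieszVec α)).lt_or_eq with h1 | h1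
  · exact h1
  · exact absurd (rieszVec_eq_zero α (inner_self_eq_zero.mp h1.symm)) h

lemma rootRefl_eq_id_of_riesz_zero (α : 𝔞 →ₗ[ℝ] ℝ) (h : rieszVec α = 0) :
    rootRefl α = 1 := by
  ext x; simp [rootRefl_apply, h]

lemma apply_rootRefl_self (α : 𝔞 →ₗ[ℝ] ℝ) (h : α ≠ 0) (x : 𝔞) :
    α (rootRefl α x) = - α x := by
  have h0 : α (rieszVec α) ≠ 0 := (riesz_self_pos α h).ne'
  rw [rootRefl_apply]
  simp only [map_sub, map_smul, smul_eq_mul]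
  field_simp
  ring

lemma comp_rootRefl_self (α : 𝔞 →ₗ[ℝ] ℝ) (h : α ≠ 0) :
    α ∘ₗ (rootRefl α : 𝔞 →ₗ[ℝ] 𝔞) = -α := by
  ext x; simpa using apply_rootRefl_self α h x

lemma rootRefl_mul_self (α : 𝔞 →ₗ[ℝ] ℝ) : rootRefl α * rootRefl α = 1 := by
  rcases eq_or_ne α 0 with rfl | h
  · have : rieszVec (0 : 𝔞 →ₗ[ℝ] ℝ) = 0 := by
      have := riesz_self (0 : 𝔞 →ₗ[ℝ] ℝ)
      simp only [LinearMap.zero_apply] at this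
      exact inner_self_eq_zero.mp this.symm
    rw [rootRefl_eq_id_of_riesz_zero _ this]; simp
  · have h0 : α (rieszVec α) ≠ 0 := (riesz_self_pos α h).ne'
    ext x
    have h1 : α (rootRefl α x) = - α x := apply_rootRefl_self α h x
    rw [Module.End.mul_apply, Module.End.one_apply, rootRefl_apply α (rootRefl α x), h1,
      rootRefl_apply α x]
    have h2 : 2 / α (rieszVec α) * - α x = -(2 / α (rieszVec α) * α x) := by ring
    rw [h2]
    module

lemma rootRefl_inner (α : 𝔞 →ₗ[ℝ] ℝ) (x y : 𝔞) :
    ⟪rootRefl α x, rootRefl α y⟫ = ⟪x, y⟫ := by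
  rcases eq_or_ne (rieszVec α) 0 with h | h
  · rw [rootRefl_eq_id_of_riesz_zero α h]; rfl
  · have h0 : ⟪rieszVec α, rieszVec α⟫ ≠ 0 := inner_self_ne_zero.mpr h
    rw [rootRefl_apply, rootRefl_apply]
    simp only [← riesz_apply]
    simp only [inner_sub_left, inner_sub_right, real_inner_smul_left, real_inner_smul_right]
    rw [real_inner_comm x (rieszVec α)]
    field_simp
    ring

lemma rieszVec_comp (β : 𝔞 →ₗ[ℝ] ℝ) (p q : Module.End ℝ 𝔞) (hpq : p * q = 1)
    (hp : ∀ x y, ⟪p x, p y⟫ = ⟪x, y⟫) :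
    rieszVec (β ∘ₗ (p : 𝔞 →ₗ[ℝ] 𝔞)) = q (rieszVec β) := by
  have hpq' : ∀ z, p (q z) = z := fun z => by
    rw [← Module.End.mul_apply, hpq, Module.End.one_apply]
  apply ext_inner_right ℝ
  intro x
  rw [riesz_apply]
  symm
  calc ⟪q (rieszVec β), x⟫ = ⟪p (q (rieszVec β)), p x⟫ := (hp _ _).symm
    _ = ⟪rieszVec β, p x⟫ := by rw [hpq']
    _ = β (p x) := riesz_apply _ _
    _ = (β ∘ₗ (p : 𝔞 →ₗ[ℝ] 𝔞)) x := rfl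

lemma rootRefl_comp_eq (β : 𝔞 →ₗ[ℝ] ℝ) (p q : Module.End ℝ 𝔞) (hpq : p * q = 1)
    (hqp : q * p = 1) (hp : ∀ x y, ⟪p x, p y⟫ = ⟪x, y⟫) :
    rootRefl (β ∘ₗ (p : 𝔞 →ₗ[ℝ] 𝔞)) = q * rootRefl β * p := by
  have hpq' : ∀ z, p (q z) = z := fun z => by
    rw [← Module.End.mul_apply, hpq, Module.End.one_apply]
  have hqp' : ∀ z, q (p z) = z := fun z => by
    rw [← Module.End.mul_apply, hqp, Module.End.one_apply]
  have hu : rieszVec (β ∘ₗ (p : 𝔞 →ₗ[ℝ] 𝔞)) = q (rieszVec β) := rieszVec_comp β p q hpq hp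
  ext x
  rw [Module.End.mul_apply, Module.End.mul_apply, rootRefl_apply, rootRefl_apply, hu]
  have h1 : (β ∘ₗ (p : 𝔞 →ₗ[ℝ] 𝔞)) (q (rieszVec β)) = β (rieszVec β) := by
    simp only [LinearMap.comp_apply, hpq']
  have h2 : (β ∘ₗ (p : 𝔞 →ₗ[ℝ] 𝔞)) x = β (p x) := rfl
  rw [h1, h2, map_sub, map_smul, hqp']

lemma weylSubmonoid_inv {S : Set (𝔞 →ₗ[ℝ] ℝ)} {w : Module.End ℝ 𝔞}
    (hw : w ∈ weylSubmonoid S) : ∃ w' ∈ weylSubmonoid S, w * w' = 1 ∧ w' * w = 1 := by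
  induction hw using Submonoid.closure_induction with
  | mem x hx =>
    obtain ⟨α, hα, rfl⟩ := hx
    exact ⟨rootRefl α, Submonoid.subset_closure ⟨α, hα, rfl⟩, rootRefl_mul_self α,
      rootRefl_mul_self α⟩
  | one => exact ⟨1, one_mem _, one_mul 1, one_mul 1⟩
  | mul a b ha hb iha ihb =>
    obtain ⟨a', ha', h1, h2⟩ := iha
    obtain ⟨b', hb', h3, h4⟩ := ihb
    refine ⟨b' * a', mul_mem hb' ha', ?_, ?_⟩
    · rw [mul_assoc, ← mul_assoc b b' a', h3, one_mul, h1]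
    · rw [mul_assoc, ← mul_assoc a' a b, h2, one_mul, h4]

lemma weylSubmonoid_inner {S : Set (𝔞 →ₗ[ℝ] ℝ)} {w : Module.End ℝ 𝔞}
    (hw : w ∈ weylSubmonoid S) (x y : 𝔞) : ⟪w x, w y⟫ = ⟪x, y⟫ := by
  induction hw using Submonoid.closure_induction generalizing x y with
  | mem s hs =>
    obtain ⟨α, hα, rfl⟩ := hs
    exact rootRefl_inner α x y
  | one => rfl
  | mul a b ha hb iha ihb =>
    rw [Module.End.mul_apply, Module.End.mul_apply, iha, ihb]

variable {rts pos : Set (𝔞 →ₗ[ℝ] ℝ)} {sim : Finset (𝔞 →ₗ[ℝ] ℝ)}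

lemma coeff_eq_zero (hRS : IsRootSystemWithBase rts pos sim) {c : (𝔞 →ₗ[ℝ] ℝ) → ℝ}
    (h : ∑ γ ∈ sim, c γ • γ = 0) : ∀ γ ∈ sim, c γ = 0 := by
  have h2 : ∑ i : sim, c ↑i • ((i : 𝔞 →ₗ[ℝ] ℝ)) = 0 := by
    rw [Finset.sum_coe_sort sim (fun γ => c γ • γ)]; exact h
  have := Fintype.linearIndependent_iff.mp hRS.indep (fun i => c ↑i) h2
  exact fun γ hγ => this ⟨γ, hγ⟩

lemma rootRefl_smul {c : ℝ} (hc : c ≠ 0) (α : 𝔞 →ₗ[ℝ] ℝ) :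
    rootRefl (c • α) = rootRefl α := by
  have hriesz : rieszVec (c • α) = c • rieszVec α := by
    simp [rieszVec, map_smul]
  rcases eq_or_ne (α (rieszVec α)) 0 with ha | ha
  · have hu : rieszVec α = 0 := by
      rw [riesz_self] at ha; exact inner_self_eq_zero.mp ha
    have h1 : rootRefl α = 1 := rootRefl_eq_id_of_riesz_zero α hu
    have h2 : rootRefl (c • α) = 1 := by
      apply rootRefl_eq_id_of_riesz_zero
      rw [hriesz, hu, smul_zero]
    rw [h1, h2]
  · ext x
    rw [rootRefl_apply, rootRefl_apply, hriesz]
    have e1 : (c • α) x = c * α x := rfl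
    have e2 : (c • α) (c • rieszVec α) = c * (c * α (rieszVec α)) := by
      simp [map_smul]
    rw [e1, e2, smul_smul]
    have hsc : 2 / (c * (c * α (rieszVec α))) * (c * α x) * c = 2 / α (rieszVec α) * α x := by
      field_simp
    rw [hsc]

lemma pos_apply_pos (hRS : IsRootSystemWithBase rts pos sim) {H : 𝔞}
    (hH : H ∈ weylChamber sim) {β : 𝔞 →ₗ[ℝ] ℝ} (hβ : β ∈ pos) : 0 < β H := by
  obtain ⟨c, hc0, hceq⟩ := hRS.pos_comb β hβ
  have hβH : β H = ∑ γ ∈ sim, c γ * γ H := by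
    rw [hceq]; simp [LinearMap.sum_apply]
  by_contra hle
  push_neg at hle
  have hnn : ∀ γ ∈ sim, 0 ≤ c γ * γ H :=
    fun γ hγ => mul_nonneg (hc0 γ hγ) (le_of_lt (hH γ hγ))
  have hsum0 : ∑ γ ∈ sim, c γ * γ H = 0 :=
    le_antisymm (hβH ▸ hle) (Finset.sum_nonneg hnn)
  have hterm0 := (Finset.sum_eq_zero_iff_of_nonneg hnn).mp hsum0
  have hc00 : ∀ γ ∈ sim, c γ = 0 := by
    intro γ hγ
    have := hterm0 γ hγ
    rcases mul_eq_zero.mp this with h | h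
    · exact h
    · exact absurd h (ne_of_gt (hH γ hγ))
  have hβ0 : β = 0 := by
    rw [hceq]
    exact Finset.sum_eq_zero fun γ hγ => by rw [hc00 γ hγ, zero_smul]
  exact hRS.ne_zero (hβ0 ▸ hRS.pos_subset hβ)

lemma mem_pos_iff (hRS : IsRootSystemWithBase rts pos sim) {H : 𝔞}
    (hH : H ∈ weylChamber sim) {β : 𝔞 →ₗ[ℝ] ℝ} (hβ : β ∈ rts) : β ∈ pos ↔ 0 < β H := by
  constructor
  · exact fun h => pos_apply_pos hRS hH h
  · intro h
    have : β ∈ pos ∪ (fun β => -β) '' pos := hRS.union ▸ hβ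
    rcases this with h1 | ⟨δ, hδ, heq⟩
    · exact h1
    · exfalso
      have : (-δ) H = - δ H := rfl
      have hδH := pos_apply_pos hRS hH hδ
      rw [← heq] at h
      simp only [LinearMap.neg_apply] at h
      linarith

lemma comp_mem_rts (hRS : IsRootSystemWithBase rts pos sim) {S : Set (𝔞 →ₗ[ℝ] ℝ)}
    (hS : S ⊆ rts) {w : Module.End ℝ 𝔞} (hw : w ∈ weylSubmonoid S) {β : 𝔞 →ₗ[ℝ] ℝ}
    (hβ : β ∈ rts) : β ∘ₗ (w : 𝔞 →ₗ[ℝ] 𝔞) ∈ rts := by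
  induction hw using Submonoid.closure_induction generalizing β with
  | mem s hs =>
    obtain ⟨α, hα, rfl⟩ := hs
    exact hRS.refl_mem α (hS hα) β hβ
  | one =>
    have h1 : β ∘ₗ ((1 : Module.End ℝ 𝔞) : 𝔞 →ₗ[ℝ] 𝔞) = β := LinearMap.comp_id β
    rw [h1]; exact hβ
  | mul a b ha hb iha ihb =>
    have : β ∘ₗ ((a * b : Module.End ℝ 𝔞) : 𝔞 →ₗ[ℝ] 𝔞) = (β ∘ₗ a) ∘ₗ b := rfl
    rw [this]
    exact ihb (iha hβ)

lemma comp_rootRefl (β α : 𝔞 →ₗ[ℝ] ℝ) :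
    β ∘ₗ (rootRefl α : 𝔞 →ₗ[ℝ] 𝔞)
      = β - (2 * β (rieszVec α) / α (rieszVec α)) • α := by
  ext x
  simp only [LinearMap.comp_apply, LinearMap.sub_apply, LinearMap.smul_apply, smul_eq_mul]
  rw [rootRefl_apply, map_sub, map_smul, smul_eq_mul]
  ring

/-- L1: if the pullback of a positive root under a simple reflection is negative,
then the root is a positive multiple of the simple root, hence has the same reflection. -/
lemma refl_eq_of_comp_neg (hRS : IsRootSystemWithBase rts pos sim) {α β : 𝔞 →ₗ[ℝ] ℝ}
    (hα : α ∈ sim) (hβ : β ∈ pos)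
    (h : β ∘ₗ (rootRefl α : 𝔞 →ₗ[ℝ] 𝔞) ∈ (fun β => -β) '' pos) :
    rootRefl β = rootRefl α := by
  classical
  obtain ⟨δ, hδ, heq⟩ := h
  have heq' : -δ = β ∘ₗ (rootRefl α : 𝔞 →ₗ[ℝ] 𝔞) := heq
  set t : ℝ := 2 * β (rieszVec α) / α (rieszVec α) with ht
  have h2 : -δ = β - t • α := by rw [heq', comp_rootRefl]
  have h3 : δ = t • α - β := by rw [← neg_neg δ, h2, neg_sub]
  have hsum : β + δ = t • α := by rw [h3]; abel
  obtain ⟨b, hb0, hbeq⟩ := hRS.pos_comb β hβ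
  obtain ⟨d, hd0, hdeq⟩ := hRS.pos_comb δ hδ
  have hsingle : ∑ γ ∈ sim, (if γ = α then t else 0) • γ = t • α := by
    rw [Finset.sum_eq_single α]
    · rw [if_pos rfl]
    · intro γ hγ hne; rw [if_neg hne, zero_smul]
    · intro habs; exact absurd hα habs
  have hzero : ∑ γ ∈ sim, (b γ + d γ - if γ = α then t else 0) • γ = 0 := by
    have e : ∀ γ : 𝔞 →ₗ[ℝ] ℝ, (b γ + d γ - if γ = α then t else 0) • γ
        = b γ • γ + d γ • γ - (if γ = α then t else 0) • γ := fun γ =>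
      (sub_smul _ _ γ).trans (congrArg (fun x => x - _) (add_smul _ _ γ))
    simp only [e]
    rw [Finset.sum_sub_distrib, Finset.sum_add_distrib, ← hbeq, ← hdeq, hsingle, hsum, sub_self]
  have hcoeff := coeff_eq_zero hRS hzero
  have hb_zero : ∀ γ ∈ sim, γ ≠ α → b γ = 0 := by
    intro γ hγ hne
    have := hcoeff γ hγ
    rw [if_neg hne] at this
    have h1 := hb0 γ hγ
    have h2 := hd0 γ hγ
    linarith
  have hβα : β = b α • α := by
    rw [hbeq]
    rw [Finset.sum_eq_single α]
    · intro γ hγ hne; rw [hb_zero γ hγ hne, zero_smul]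
    · intro habs; exact absurd hα habs
  have hbα : b α ≠ 0 := by
    intro h0
    rw [h0, zero_smul] at hβα
    exact hRS.ne_zero (hβα ▸ hRS.pos_subset hβ)
  rw [hβα]
  exact rootRefl_smul hbα α

/-- Exchange lemma. -/
lemma exchange (hRS : IsRootSystemWithBase rts pos sim) :
    ∀ (t : List (Module.End ℝ 𝔞)), (∀ s ∈ t, ∃ α ∈ sim, rootRefl α = s) →
    ∀ β ∈ pos, β ∘ₗ (t.prod : 𝔞 →ₗ[ℝ] 𝔞) ∈ (fun β => -β) '' pos →
    ∃ t' : List (Module.End ℝ 𝔞), (∀ s ∈ t', ∃ α ∈ sim, rootRefl α = s) ∧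
      t'.length + 1 = t.length ∧ t.prod = rootRefl β * t'.prod := by
  intro t
  induction t with
  | nil =>
    intro _ β hβ habs
    exfalso
    simp only [List.prod_nil] at habs
    have h1 : β ∘ₗ ((1 : Module.End ℝ 𝔞) : 𝔞 →ₗ[ℝ] 𝔞) = β := LinearMap.comp_id β
    rw [h1] at habs
    exact Set.disjoint_left.mp hRS.disjoint hβ habs
  | cons s t ih =>
    intro hlet β hβ hneg
    obtain ⟨γ, hγ, rfl⟩ := hlet s List.mem_cons_self
    have hlet' : ∀ s ∈ t, ∃ α ∈ sim, rootRefl α = s := fun x hx => hlet x (List.mem_cons_of_mem _ hx)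
    have hβ' : β ∘ₗ (rootRefl γ : 𝔞 →ₗ[ℝ] 𝔞) ∈ rts :=
      hRS.refl_mem γ (hRS.pos_subset (hRS.sim_subset hγ)) β (hRS.pos_subset hβ)
    have hcomp : β ∘ₗ (((rootRefl γ) :: t).prod : 𝔞 →ₗ[ℝ] 𝔞)
        = (β ∘ₗ (rootRefl γ : 𝔞 →ₗ[ℝ] 𝔞)) ∘ₗ (t.prod : 𝔞 →ₗ[ℝ] 𝔞) := by
      rw [List.prod_cons]; rfl
    by_cases hcase : β ∘ₗ (rootRefl γ : 𝔞 →ₗ[ℝ] 𝔞) ∈ (fun β => -β) '' pos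
    · refine ⟨t, hlet', by simp, ?_⟩
      rw [refl_eq_of_comp_neg hRS hγ hβ hcase, List.prod_cons]
    · have hpos' : β ∘ₗ (rootRefl γ : 𝔞 →ₗ[ℝ] 𝔞) ∈ pos := by
        have := hRS.union ▸ hβ'
        rcases this with h | h
        · exact h
        · exact absurd h hcase
      have hneg' : (β ∘ₗ (rootRefl γ : 𝔞 →ₗ[ℝ] 𝔞)) ∘ₗ (t.prod : 𝔞 →ₗ[ℝ] 𝔞)
          ∈ (fun β => -β) '' pos := by rw [← hcomp]; exact hneg
      obtain ⟨t', hlet'', hlen, hprod⟩ := ih hlet' _ hpos' hneg'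
      refine ⟨rootRefl γ :: t', fun x hx => ?_, by simpa using hlen, ?_⟩
      · rcases List.mem_cons.mp hx with h | h
        · exact ⟨γ, hγ, h.symm⟩
        · exact hlet'' x h
      · have hconj : rootRefl (β ∘ₗ (rootRefl γ : 𝔞 →ₗ[ℝ] 𝔞))
            = rootRefl γ * rootRefl β * rootRefl γ :=
          rootRefl_comp_eq β (rootRefl γ) (rootRefl γ) (rootRefl_mul_self γ)
            (rootRefl_mul_self γ) (rootRefl_inner γ)
        rw [List.prod_cons, List.prod_cons, hprod, hconj]
        have hγγ := rootRefl_mul_self γ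
        calc rootRefl γ * (rootRefl γ * rootRefl β * rootRefl γ * t'.prod)
            = (rootRefl γ * rootRefl γ) * (rootRefl β * (rootRefl γ * t'.prod)) := by
              simp only [mul_assoc]
          _ = rootRefl β * (rootRefl γ * t'.prod) := by rw [hγγ, one_mul]

/-- Main induction: a product of simple reflections whose pullback action preserves
the positive system is the identity. -/
lemma prod_eq_one_of_pos_stable (hRS : IsRootSystemWithBase rts pos sim) :
    ∀ (n : ℕ) (t : List (Module.End ℝ 𝔞)), t.length = n →
    (∀ s ∈ t, ∃ α ∈ sim, rootRefl α = s) →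
    (∀ β ∈ pos, β ∘ₗ (t.prod : 𝔞 →ₗ[ℝ] 𝔞) ∈ pos) → t.prod = 1 := by
  intro n
  induction n using Nat.strong_induction_on with
  | _ n ih =>
    intro t hlen hlet hstable
    match t, hlen with
    | [], _ => simp
    | s :: t₂, hlen =>
      obtain ⟨α, hα, rfl⟩ := hlet s List.mem_cons_self
      have hlet₂ : ∀ s ∈ t₂, ∃ α ∈ sim, rootRefl α = s :=
        fun x hx => hlet x (List.mem_cons_of_mem _ hx)
      have hαpos : α ∈ pos := hRS.sim_subset hα
      have hαne : α ≠ 0 := fun h => hRS.ne_zero (h ▸ hRS.pos_subset hαpos)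
      have hstep : α ∘ₗ ((rootRefl α :: t₂).prod : 𝔞 →ₗ[ℝ] 𝔞)
          = (-α) ∘ₗ (t₂.prod : 𝔞 →ₗ[ℝ] 𝔞) := by
        rw [List.prod_cons]
        have : α ∘ₗ ((rootRefl α * t₂.prod : Module.End ℝ 𝔞) : 𝔞 →ₗ[ℝ] 𝔞)
            = (α ∘ₗ (rootRefl α : 𝔞 →ₗ[ℝ] 𝔞)) ∘ₗ (t₂.prod : 𝔞 →ₗ[ℝ] 𝔞) := rfl
        rw [this, comp_rootRefl_self α hαne]
      have hneg : α ∘ₗ (t₂.prod : 𝔞 →ₗ[ℝ] 𝔞) ∈ (fun β => -β) '' pos := by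
        have h1 := hstable α hαpos
        rw [hstep] at h1
        refine ⟨(-α) ∘ₗ (t₂.prod : 𝔞 →ₗ[ℝ] 𝔞), h1, ?_⟩
        ext x
        simp
      obtain ⟨t', hlet', hlen', hprod⟩ := exchange hRS t₂ hlet₂ α hαpos hneg
      have hfold : (rootRefl α :: t₂).prod = t'.prod := by
        rw [List.prod_cons, hprod, ← mul_assoc, rootRefl_mul_self, one_mul]
      rw [hfold]
      have hlt : t'.length < n := by
        have h1 : t₂.length + 1 = n := by simpa using hlen
        omega
      exact ih t'.length hlt t' rfl hlet' (fun β hβ => by rw [← hfold]; exact hstable β hβ)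

lemma weylChamber_nonempty (hRS : IsRootSystemWithBase rts pos sim) :
    (weylChamber sim).Nonempty := by
  classical
  have key : ∀ α ∈ sim, ∃ H : 𝔞, α H = 1 ∧ ∀ γ ∈ sim, γ ≠ α → γ H = 0 := by
    intro α hα
    have hnot : (α : 𝔞 →ₗ[ℝ] ℝ) ∉ Submodule.span ℝ (↑(sim.erase α) : Set (𝔞 →ₗ[ℝ] ℝ)) := by
      have himg : ((fun a : sim => (a : 𝔞 →ₗ[ℝ] ℝ)) '' {x : sim | (x : 𝔞 →ₗ[ℝ] ℝ) ∈ sim.erase α})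
          = (↑(sim.erase α) : Set (𝔞 →ₗ[ℝ] ℝ)) := by
        ext γ
        constructor
        · rintro ⟨x, hx, rfl⟩; exact hx
        · intro hγ
          exact ⟨⟨γ, Finset.mem_of_mem_erase hγ⟩, hγ, rfl⟩
      have hx : (⟨α, hα⟩ : sim) ∉ {x : sim | (x : 𝔞 →ₗ[ℝ] ℝ) ∈ sim.erase α} := by
        simp [Set.mem_setOf_eq, Finset.mem_erase]
      have := hRS.indep.notMem_span_image hx
      rwa [himg] at this
    have hex : ∃ H : 𝔞, (∀ γ ∈ sim.erase α, γ H = 0) ∧ α H ≠ 0 := by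
      by_contra hcon
      push_neg at hcon
      have hle : (⨅ γ : (sim.erase α : Finset (𝔞 →ₗ[ℝ] ℝ)), LinearMap.ker (γ : 𝔞 →ₗ[ℝ] ℝ))
          ≤ LinearMap.ker α := by
        intro H hH
        simp only [Submodule.mem_iInf] at hH
        rw [LinearMap.mem_ker]
        exact hcon H fun γ hγ => hH ⟨γ, hγ⟩
      have hspan := mem_span_of_iInf_ker_le_ker hle
      have hr : Set.range (fun γ : (sim.erase α : Finset (𝔞 →ₗ[ℝ] ℝ)) => (γ : 𝔞 →ₗ[ℝ] ℝ))
          = (↑(sim.erase α) : Set (𝔞 →ₗ[ℝ] ℝ)) := Subtype.range_coe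
      rw [hr] at hspan
      exact hnot hspan
    obtain ⟨H, hker, hne⟩ := hex
    refine ⟨(α H)⁻¹ • H, by rw [map_smul, smul_eq_mul, inv_mul_cancel₀ hne], ?_⟩
    intro γ hγ hγα
    rw [map_smul, hker γ (Finset.mem_erase.mpr ⟨hγα, hγ⟩), smul_zero]
  choose! F hF1 hF2 using key
  refine ⟨∑ α ∈ sim, F α, ?_⟩
  intro γ hγ
  have hsum : γ (∑ α ∈ sim, F α) = ∑ α ∈ sim, γ (F α) := map_sum γ F sim
  rw [hsum, Finset.sum_eq_single γ]
  · rw [hF1 γ hγ]; norm_num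
  · intro b hb hne
    exact hF2 b hb γ hγ (Ne.symm hne)
  · intro habs; exact absurd hγ habs

lemma isOpen_weylChamber : IsOpen (weylChamber sim) := by
  have heq : weylChamber sim = ⋂ α ∈ sim, {H : 𝔞 | 0 < α H} := by
    ext H; simp [weylChamber, Set.mem_iInter]
  rw [heq]
  exact isOpen_biInter_finset fun α _ =>
    isOpen_lt continuous_const α.continuous_of_finiteDimensional

lemma mem_chamber_of_mem_closure (hRS : IsRootSystemWithBase rts pos sim) {H : 𝔞}
    (hH : H ∈ closure (weylChamber sim)) (hreg : ∀ α ∈ rts, α H ≠ 0) :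
    H ∈ weylChamber sim := by
  intro α hα
  have hsub : closure (weylChamber sim) ⊆ {K : 𝔞 | 0 ≤ α K} := by
    apply closure_minimal
    · exact fun K hK => le_of_lt (hK α hα)
    · exact isClosed_le continuous_const α.continuous_of_finiteDimensional
  exact lt_of_le_of_ne (hsub hH) (Ne.symm (hreg α (hRS.pos_subset (hRS.sim_subset hα))))

lemma interior_biUnion_ker_empty :
    ∀ T : Finset (𝔞 →ₗ[ℝ] ℝ), (∀ α ∈ T, α ≠ 0) →
      interior (⋃ α ∈ T, (LinearMap.ker α : Set 𝔞)) = ∅ := by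
  classical
  intro T
  induction T using Finset.induction with
  | empty => simp
  | @insert a s ha ih =>
    intro hne
    rw [Finset.set_biUnion_insert]
    have hclosed : IsClosed (LinearMap.ker a : Set 𝔞) := by
      have : (LinearMap.ker a : Set 𝔞) = a ⁻¹' {0} := by
        ext x; simp [LinearMap.mem_ker]
      rw [this]
      exact isClosed_singleton.preimage a.continuous_of_finiteDimensional
    rw [interior_union_isClosed_of_interior_empty hclosed
      (ih fun α hα => hne α (Finset.mem_insert_of_mem hα))]
    by_contra hcon
    have hnon : (interior (LinearMap.ker a : Set 𝔞)).Nonempty :=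
      Set.nonempty_iff_ne_empty.mpr hcon
    have := Submodule.eq_top_of_nonempty_interior' _ hnon
    exact hne a (Finset.mem_insert_self a s) (LinearMap.ker_eq_top.mp this)

lemma exists_regular (hRS : IsRootSystemWithBase rts pos sim) {U : Set 𝔞}
    (hU : IsOpen U) (hne : U.Nonempty) : ∃ H ∈ U, ∀ α ∈ rts, α H ≠ 0 := by
  classical
  by_contra hcon
  push_neg at hcon
  have hsub : U ⊆ ⋃ α ∈ hRS.finite.toFinset, (LinearMap.ker α : Set 𝔞) := by
    intro H hH
    obtain ⟨α, hα, h0⟩ := hcon H hH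
    exact Set.mem_biUnion (hRS.finite.mem_toFinset.mpr hα) (LinearMap.mem_ker.mpr h0)
  have hint := interior_biUnion_ker_empty hRS.finite.toFinset
    (fun α hα h0 => hRS.ne_zero (h0 ▸ hRS.finite.mem_toFinset.mp hα))
  obtain ⟨x, hx⟩ := hne
  have : x ∈ interior (⋃ α ∈ hRS.finite.toFinset, (LinearMap.ker α : Set 𝔞)) :=
    interior_maximal hsub hU hx
  rw [hint] at this
  exact this

lemma rootRefl_mem_sim_closure (hRS : IsRootSystemWithBase rts pos sim) :
    ∀ β ∈ rts, rootRefl β ∈ weylSubmonoid (↑sim : Set (𝔞 →ₗ[ℝ] ℝ)) := by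
  classical
  obtain ⟨H₀, hH₀⟩ := weylChamber_nonempty hRS
  have main : ∀ n : ℕ, ∀ β ∈ pos,
      (hRS.finite.toFinset.filter (fun γ => γ H₀ < β H₀)).card = n →
      rootRefl β ∈ weylSubmonoid (↑sim : Set (𝔞 →ₗ[ℝ] ℝ)) := by
    intro n
    induction n using Nat.strong_induction_on with
    | _ n ih =>
      intro β hβ hcard
      have hβrts := hRS.pos_subset hβ
      have hβne : β ≠ 0 := fun h => hRS.ne_zero (h ▸ hβrts)
      obtain ⟨b, hb0, hbeq⟩ := hRS.pos_comb β hβ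
      have hself : 0 < β (rieszVec β) := riesz_self_pos β hβne
      have hex : ∃ α ∈ sim, 0 < b α * α (rieszVec β) := by
        by_contra hcon
        push_neg at hcon
        have heval : β (rieszVec β) = ∑ γ ∈ sim, b γ * γ (rieszVec β) := by
          rw [hbeq]; simp [LinearMap.sum_apply]
        have hle : β (rieszVec β) ≤ 0 := heval ▸ Finset.sum_nonpos hcon
        linarith
      obtain ⟨α, hα, hbpos⟩ := hex
      have hαu : 0 < α (rieszVec β) := by
        rcases le_or_gt (α (rieszVec β)) 0 with h | h
        · nlinarith [hb0 α hα]
        · exact h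
      have hαpos : α ∈ pos := hRS.sim_subset hα
      have hαne : α ≠ 0 := fun h => hRS.ne_zero (h ▸ hRS.pos_subset hαpos)
      have hαself : 0 < α (rieszVec α) := riesz_self_pos α hαne
      have hsym : β (rieszVec α) = α (rieszVec β) := by
        rw [← riesz_apply β (rieszVec α), ← riesz_apply α (rieszVec β), real_inner_comm]
      have hαmem : rootRefl α ∈ weylSubmonoid (↑sim : Set (𝔞 →ₗ[ℝ] ℝ)) :=
        Submonoid.subset_closure ⟨α, hα, rfl⟩
      by_cases hcase : β ∘ₗ (rootRefl α : 𝔞 →ₗ[ℝ] 𝔞) ∈ (fun β => -β) '' pos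
      · rw [refl_eq_of_comp_neg hRS hα hβ hcase]
        exact hαmem
      · have hβ'rts : β ∘ₗ (rootRefl α : 𝔞 →ₗ[ℝ] 𝔞) ∈ rts :=
          hRS.refl_mem α (hRS.pos_subset hαpos) β hβrts
        have hβ'pos : β ∘ₗ (rootRefl α : 𝔞 →ₗ[ℝ] 𝔞) ∈ pos := by
          rcases hRS.union ▸ hβ'rts with h | h
          · exact h
          · exact absurd h hcase
        have hval : (β ∘ₗ (rootRefl α : 𝔞 →ₗ[ℝ] 𝔞)) H₀
            = β H₀ - (2 * β (rieszVec α) / α (rieszVec α)) * (α H₀) := by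
          rw [comp_rootRefl]
          simp [LinearMap.sub_apply, LinearMap.smul_apply]
        have hαH₀ : 0 < α H₀ := hH₀ α hα
        have htpos : 0 < 2 * β (rieszVec α) / α (rieszVec α) := by
          rw [hsym]; positivity
        have hlt : (β ∘ₗ (rootRefl α : 𝔞 →ₗ[ℝ] 𝔞)) H₀ < β H₀ := by
          rw [hval]; nlinarith
        set S' := hRS.finite.toFinset.filter
          (fun γ => γ H₀ < (β ∘ₗ (rootRefl α : 𝔞 →ₗ[ℝ] 𝔞)) H₀) with hS'
        have hss : S' ⊂ hRS.finite.toFinset.filter (fun γ => γ H₀ < β H₀) := by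
          constructor
          · intro γ hγ
            rw [Finset.mem_filter] at hγ ⊢
            exact ⟨hγ.1, lt_trans hγ.2 hlt⟩
          · intro hcontra
            have hmem : β ∘ₗ (rootRefl α : 𝔞 →ₗ[ℝ] 𝔞)
                ∈ hRS.finite.toFinset.filter (fun γ => γ H₀ < β H₀) := by
              rw [Finset.mem_filter]
              exact ⟨hRS.finite.mem_toFinset.mpr hβ'rts, hlt⟩
            have := hcontra hmem
            rw [Finset.mem_filter] at this
            exact lt_irrefl _ this.2
        have hltcard : S'.card < n := hcard ▸ Finset.card_lt_card hss
        have hβ'mem := ih S'.card hltcard _ hβ'pos rfl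
        have hconj : rootRefl (β ∘ₗ (rootRefl α : 𝔞 →ₗ[ℝ] 𝔞))
            = rootRefl α * rootRefl β * rootRefl α :=
          rootRefl_comp_eq β (rootRefl α) (rootRefl α) (rootRefl_mul_self α)
            (rootRefl_mul_self α) (rootRefl_inner α)
        have hββ' : rootRefl β
            = rootRefl α * rootRefl (β ∘ₗ (rootRefl α : 𝔞 →ₗ[ℝ] 𝔞)) * rootRefl α := by
          rw [hconj]
          have h2 := rootRefl_mul_self α
          calc rootRefl β = 1 * rootRefl β * 1 := by rw [one_mul, mul_one]
            _ = (rootRefl α * rootRefl α) * rootRefl β * (rootRefl α * rootRefl α) := by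
                rw [h2]
            _ = rootRefl α * (rootRefl α * rootRefl β * rootRefl α) * rootRefl α := by
                simp only [mul_assoc]
        rw [hββ']
        exact mul_mem (mul_mem hαmem hβ'mem) hαmem
  intro β hβ
  rcases hRS.union ▸ hβ with h | ⟨δ, hδ, heq⟩
  · exact main _ β h rfl
  · have hδne : -δ = ((-1 : ℝ) • δ) := (neg_one_smul ℝ δ).symm
    have : rootRefl β = rootRefl δ := by
      rw [show β = -δ from heq.symm, hδne, rootRefl_smul (by norm_num : (-1 : ℝ) ≠ 0)]
    rw [this]
    exact main _ δ hδ rfl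


lemma isOpenMap_of_inv (w w' : Module.End ℝ 𝔞) (h1 : w * w' = 1) (h2 : w' * w = 1) :
    IsOpenMap (⇑w) := by
  let e : 𝔞 ≃ₗ[ℝ] 𝔞 := LinearEquiv.ofLinear (w : 𝔞 →ₗ[ℝ] 𝔞) (w' : 𝔞 →ₗ[ℝ] 𝔞) h1 h2
  exact e.toContinuousLinearEquiv.toHomeomorph.isOpenMap

lemma image_biUnion_subset {S : Set (𝔞 →ₗ[ℝ] ℝ)} {u : Module.End ℝ 𝔞}
    (hu : u ∈ weylSubmonoid S) (D : Set 𝔞) :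
    ⇑u '' (⋃ v ∈ weylSubmonoid S, ⇑v '' D) ⊆ ⋃ v ∈ weylSubmonoid S, ⇑v '' D := by
  rintro x ⟨y, hy, rfl⟩
  obtain ⟨v, hv, hy'⟩ := Set.mem_iUnion₂.mp hy
  obtain ⟨z, hz, rfl⟩ := hy'
  apply Set.mem_iUnion₂.mpr
  exact ⟨u * v, mul_mem hu hv, ⟨z, hz, rfl⟩⟩

lemma image_biUnion_eq {S : Set (𝔞 →ₗ[ℝ] ℝ)} {u : Module.End ℝ 𝔞}
    (hu : u ∈ weylSubmonoid S) (D : Set 𝔞) :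
    ⇑u '' (⋃ v ∈ weylSubmonoid S, ⇑v '' D) = ⋃ v ∈ weylSubmonoid S, ⇑v '' D := by
  obtain ⟨u', hu', h1, h2⟩ := weylSubmonoid_inv hu
  apply Set.Subset.antisymm (image_biUnion_subset hu D)
  intro x hx
  have hx' : u' x ∈ ⋃ v ∈ weylSubmonoid S, ⇑v '' D :=
    image_biUnion_subset hu' D ⟨x, hx, rfl⟩
  refine ⟨u' x, hx', ?_⟩
  show u (u' x) = x
  rw [← Module.End.mul_apply, h1, Module.End.one_apply]

/-- For `w₁, w₂` in the Weyl group, the open cones `int (wᵢ · W_Θ · cl 𝔞⁺)` are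
either equal or disjoint, and they are equal iff the cosets `wᵢ W_Θ` coincide. -/
theorem interior_cones_eq_or_disjoint (rts pos : Set (𝔞 →ₗ[ℝ] ℝ))
    (sim Θ : Finset (𝔞 →ₗ[ℝ] ℝ))
    (hRS : IsRootSystemWithBase rts pos sim) (hΘ : Θ ⊆ sim)
    (w₁ w₂ : Module.End ℝ 𝔞)
    (hw₁ : w₁ ∈ weylSubmonoid rts) (hw₂ : w₂ ∈ weylSubmonoid rts) :
    (interior (⇑w₁ '' ⋃ u ∈ weylSubmonoid (↑Θ : Set (𝔞 →ₗ[ℝ] ℝ)),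
          ⇑u '' closure (weylChamber sim))
        = interior (⇑w₂ '' ⋃ u ∈ weylSubmonoid (↑Θ : Set (𝔞 →ₗ[ℝ] ℝ)),
          ⇑u '' closure (weylChamber sim)) ∨
      Disjoint
        (interior (⇑w₁ '' ⋃ u ∈ weylSubmonoid (↑Θ : Set (𝔞 →ₗ[ℝ] ℝ)),
          ⇑u '' closure (weylChamber sim)))
        (interior (⇑w₂ '' ⋃ u ∈ weylSubmonoid (↑Θ : Set (𝔞 →ₗ[ℝ] ℝ)),
          ⇑u '' closure (weylChamber sim)))) ∧
    (interior (⇑w₁ '' ⋃ u ∈ weylSubmonoid (↑Θ : Set (𝔞 →ₗ[ℝ] ℝ)),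
          ⇑u '' closure (weylChamber sim))
        = interior (⇑w₂ '' ⋃ u ∈ weylSubmonoid (↑Θ : Set (𝔞 →ₗ[ℝ] ℝ)),
          ⇑u '' closure (weylChamber sim))
      ↔ (fun u => w₁ * u) '' (weylSubmonoid (↑Θ : Set (𝔞 →ₗ[ℝ] ℝ)) : Set (Module.End ℝ 𝔞))
          = (fun u => w₂ * u) '' (weylSubmonoid (↑Θ : Set (𝔞 →ₗ[ℝ] ℝ)) : Set (Module.End ℝ 𝔞))) := by
  classical
  set D := closure (weylChamber sim) with hDdef
  set C := ⋃ u ∈ weylSubmonoid (↑Θ : Set (𝔞 →ₗ[ℝ] ℝ)), ⇑u '' D with hC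
  have hΘrts : (↑Θ : Set (𝔞 →ₗ[ℝ] ℝ)) ⊆ rts :=
    fun α hα => hRS.pos_subset (hRS.sim_subset (hΘ hα))
  have hWΘ_rts : weylSubmonoid (↑Θ : Set (𝔞 →ₗ[ℝ] ℝ)) ≤ weylSubmonoid rts := by
    apply Submonoid.closure_le.mpr
    rintro x ⟨α, hα, rfl⟩
    exact Submonoid.subset_closure ⟨α, hΘrts hα, rfl⟩
  have hWrts_sim : weylSubmonoid rts ≤ weylSubmonoid (↑sim : Set (𝔞 →ₗ[ℝ] ℝ)) := by
    apply Submonoid.closure_le.mpr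
    rintro x ⟨α, hα, rfl⟩
    exact rootRefl_mem_sim_closure hRS α hα
  obtain ⟨H₀, hH₀⟩ := weylChamber_nonempty hRS
  have hinterior_ne : ∀ w ∈ weylSubmonoid rts, (interior (⇑w '' C)).Nonempty := by
    intro w hw
    obtain ⟨w', hw', h1, h2⟩ := weylSubmonoid_inv hw
    have hopen : IsOpen (⇑w '' weylChamber sim) :=
      isOpenMap_of_inv w w' h1 h2 _ isOpen_weylChamber
    have hsub : ⇑w '' weylChamber sim ⊆ ⇑w '' C := by
      apply Set.image_mono
      intro x hx
      apply Set.mem_iUnion₂.mpr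
      exact ⟨1, one_mem _, ⟨x, _root_.subset_closure hx, Module.End.one_apply x⟩⟩
    exact ⟨w H₀, interior_maximal hsub hopen ⟨H₀, hH₀, rfl⟩⟩
  have keystep : ∀ wa wb : Module.End ℝ 𝔞, wa ∈ weylSubmonoid rts → wb ∈ weylSubmonoid rts →
      (interior (⇑wa '' C) ∩ interior (⇑wb '' C)).Nonempty →
      ∃ m ∈ weylSubmonoid (↑Θ : Set (𝔞 →ₗ[ℝ] ℝ)), wa * m = wb := by
    intro wa wb hwa hwb hne
    obtain ⟨H, hHU, hreg⟩ :=
      exists_regular hRS (IsOpen.inter isOpen_interior isOpen_interior) hne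
    have hH1 : H ∈ ⇑wa '' C := interior_subset hHU.1
    have hH2 : H ∈ ⇑wb '' C := interior_subset hHU.2
    obtain ⟨x, hx, hxH⟩ := hH1
    obtain ⟨u, hu, hx'⟩ := Set.mem_iUnion₂.mp hx
    obtain ⟨y, hy, hyx⟩ := hx'
    obtain ⟨x2, hx2, hx2H⟩ := hH2
    obtain ⟨v, hv, hx2'⟩ := Set.mem_iUnion₂.mp hx2
    obtain ⟨z, hz, hzx2⟩ := hx2'
    set g := wa * u with hg
    set h := wb * v with hh
    have hgW : g ∈ weylSubmonoid rts := mul_mem hwa (hWΘ_rts hu)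
    have hhW : h ∈ weylSubmonoid rts := mul_mem hwb (hWΘ_rts hv)
    obtain ⟨g', hg', hgg1, hgg2⟩ := weylSubmonoid_inv hgW
    obtain ⟨h', hh', hhh1, hhh2⟩ := weylSubmonoid_inv hhW
    have hgyH : g y = H := by rw [hg, Module.End.mul_apply, hyx, hxH]
    have hhzH : h z = H := by rw [hh, Module.End.mul_apply, hzx2, hx2H]
    have hyg : y = g' H := by
      rw [← hgyH, ← Module.End.mul_apply, hgg2, Module.End.one_apply]
    have hzh : z = h' H := by
      rw [← hhzH, ← Module.End.mul_apply, hhh2, Module.End.one_apply]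
    have hyreg : ∀ α ∈ rts, α y ≠ 0 := by
      intro α hα
      rw [hyg]
      have hrw : α (g' H) = (α ∘ₗ (g' : 𝔞 →ₗ[ℝ] 𝔞)) H := rfl
      rw [hrw]
      exact hreg _ (comp_mem_rts hRS (Set.Subset.refl rts) hg' hα)
    have hzreg : ∀ α ∈ rts, α z ≠ 0 := by
      intro α hα
      rw [hzh]
      have hrw : α (h' H) = (α ∘ₗ (h' : 𝔞 →ₗ[ℝ] 𝔞)) H := rfl
      rw [hrw]
      exact hreg _ (comp_mem_rts hRS (Set.Subset.refl rts) hh' hα)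
    have hych : y ∈ weylChamber sim := mem_chamber_of_mem_closure hRS hy hyreg
    have hzch : z ∈ weylChamber sim := mem_chamber_of_mem_closure hRS hz hzreg
    set k := h' * g with hk
    have hkW : k ∈ weylSubmonoid rts := mul_mem hh' hgW
    have hky : k y = z := by rw [hk, Module.End.mul_apply, hgyH, hzh]
    have hstable : ∀ β ∈ pos, β ∘ₗ (k : 𝔞 →ₗ[ℝ] 𝔞) ∈ pos := by
      intro β hβ
      have hmem : β ∘ₗ (k : 𝔞 →ₗ[ℝ] 𝔞) ∈ rts :=
        comp_mem_rts hRS (Set.Subset.refl rts) hkW (hRS.pos_subset hβ)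
      apply (mem_pos_iff hRS hych hmem).mpr
      have hrw : (β ∘ₗ (k : 𝔞 →ₗ[ℝ] 𝔞)) y = β z := by rw [LinearMap.comp_apply, hky]
      rw [hrw]
      exact pos_apply_pos hRS hzch hβ
    have hksim : k ∈ Submonoid.closure (rootRefl '' (↑sim : Set (𝔞 →ₗ[ℝ] ℝ))) :=
      hWrts_sim hkW
    obtain ⟨l, hl, hlprod⟩ := Submonoid.exists_list_of_mem_closure hksim
    have hk1 : k = 1 := by
      rw [← hlprod]
      apply prod_eq_one_of_pos_stable hRS l.length l rfl
      · intro s hs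
        obtain ⟨α, hα, rfl⟩ := hl s hs
        exact ⟨α, hα, rfl⟩
      · intro β hβ
        rw [hlprod]
        exact hstable β hβ
    have hgeqh : g = h := by
      have h0 : h * k = h * 1 := by rw [hk1]
      rw [hk, ← mul_assoc, hhh1, one_mul, mul_one] at h0
      exact h0
    obtain ⟨v', hv', hvv1, hvv2⟩ := weylSubmonoid_inv hv
    refine ⟨u * v', mul_mem hu hv', ?_⟩
    calc wa * (u * v') = (wa * u) * v' := (mul_assoc _ _ _).symm
      _ = (wb * v) * v' := by rw [← hg, ← hh, hgeqh]
      _ = wb * (v * v') := mul_assoc _ _ _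
      _ = wb := by rw [hvv1, mul_one]
  have coset_of : ∀ wa wb m : Module.End ℝ 𝔞,
      m ∈ weylSubmonoid (↑Θ : Set (𝔞 →ₗ[ℝ] ℝ)) → wa * m = wb →
      (fun u => wa * u) '' (weylSubmonoid (↑Θ : Set (𝔞 →ₗ[ℝ] ℝ)) : Set (Module.End ℝ 𝔞))
        = (fun u => wb * u) '' (weylSubmonoid (↑Θ : Set (𝔞 →ₗ[ℝ] ℝ)) : Set (Module.End ℝ 𝔞)) := by
    intro wa wb m hm heq
    obtain ⟨m', hm', hmm1, hmm2⟩ := weylSubmonoid_inv hm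
    ext x
    constructor
    · rintro ⟨p, hp, rfl⟩
      refine ⟨m' * p, mul_mem hm' hp, ?_⟩
      show wb * (m' * p) = wa * p
      rw [← heq]
      calc wa * m * (m' * p) = wa * (m * (m' * p)) := mul_assoc _ _ _
        _ = wa * ((m * m') * p) := by rw [mul_assoc]
        _ = wa * p := by rw [hmm1, one_mul]
    · rintro ⟨p, hp, rfl⟩
      refine ⟨m * p, mul_mem hm hp, ?_⟩
      show wa * (m * p) = wb * p
      rw [← heq, mul_assoc]
  have images_of : ∀ wa wb : Module.End ℝ 𝔞,
      (fun u => wa * u) '' (weylSubmonoid (↑Θ : Set (𝔞 →ₗ[ℝ] ℝ)) : Set (Module.End ℝ 𝔞))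
        = (fun u => wb * u) '' (weylSubmonoid (↑Θ : Set (𝔞 →ₗ[ℝ] ℝ)) : Set (Module.End ℝ 𝔞)) →
      ⇑wa '' C = ⇑wb '' C := by
    intro wa wb hcoset
    have hwbmem : wb ∈ (fun u => wa * u) ''
        (weylSubmonoid (↑Θ : Set (𝔞 →ₗ[ℝ] ℝ)) : Set (Module.End ℝ 𝔞)) := by
      rw [hcoset]
      exact ⟨1, one_mem _, mul_one wb⟩
    obtain ⟨m, hm, hmeq⟩ := hwbmem
    have him : ⇑m '' C = C := by
      rw [hC]
      exact image_biUnion_eq hm D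
    have hsplit : ⇑wb '' C = ⇑wa '' (⇑m '' C) := by
      rw [← Set.image_comp]
      have hcoe : ⇑wa ∘ ⇑m = ⇑(wa * m) := rfl
      have hmeq' : wa * m = wb := hmeq
      rw [hcoe, hmeq']
    rw [hsplit, him]
  constructor
  · by_cases hd : Disjoint (interior (⇑w₁ '' C)) (interior (⇑w₂ '' C))
    · exact Or.inr hd
    · left
      obtain ⟨m, hm, hmeq⟩ :=
        keystep w₁ w₂ hw₁ hw₂ (Set.not_disjoint_iff_nonempty_inter.mp hd)
      rw [images_of w₁ w₂ (coset_of w₁ w₂ m hm hmeq)]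
  · constructor
    · intro hAeq
      have hne : (interior (⇑w₁ '' C) ∩ interior (⇑w₂ '' C)).Nonempty := by
        rw [hAeq, Set.inter_self]
        exact hinterior_ne w₂ hw₂
      obtain ⟨m, hm, hmeq⟩ := keystep w₁ w₂ hw₁ hw₂ hne
      exact coset_of w₁ w₂ m hm hmeq
    · intro hcoset
      rw [images_of w₁ w₂ hcoset]

end
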